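/- Let {F_e}_{e>0} be a family of CDFs on ℝ such that each F_e is continuous and strictly increasing, for each fixed x the map e ↦ F_e(x) is continuous, strictly decreasing, and tends to 0 as e → ∞. Let k ∈ (0,1) and let p be a Borel measure on (0,∞) with p((0,∞)) ∈ (k,1]. Then there exists a unique s ∈ ℝ such that ∫ (1 - F_e(s)) dp(e) = k. -/

import Mathlib

open MeasureTheory Set Filter Topology

noncomputable section

/-- A family of performance CDFs `{F_e}` as in Definition 2 (RPF):
each `F e` is a continuous strictly increasing CDF, and for each `x`
the map `e ↦ F e x` is continuous, strictly decreasing on `(0,∞)`,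
and tends to `0` as `e → ∞`. -/
def IsCDFfam (F : ℝ → ℝ → ℝ) : Prop :=
  (∀ e ∈ Set.Ioi (0:ℝ), Continuous (F e) ∧ StrictMono (F e) ∧
    Filter.Tendsto (F e) Filter.atBot (nhds 0) ∧
    Filter.Tendsto (F e) Filter.atTop (nhds 1)) ∧
  (∀ x : ℝ, ContinuousOn (fun e => F e x) (Set.Ioi 0) ∧
    StrictAntiOn (fun e => F e x) (Set.Ioi 0) ∧
    Filter.Tendsto (fun e => F e x) Filter.atTop (nhds 0))

/-- `p ∈ Δ_k`: a Borel measure on `E = (0,∞)` (modeled as a measure on `ℝ`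
giving no mass to `(-∞,0]`) with total mass in `(k, 1]`. -/
def MemDelta (k : ℝ) (p : MeasureTheory.Measure ℝ) : Prop :=
  p (Set.Iic 0) = 0 ∧ ENNReal.ofReal k < p Set.univ ∧ p Set.univ ≤ 1

/-- A contest success function with budget `k`. -/
def IsCSF (k : ℝ) (W : ℝ → MeasureTheory.Measure ℝ → ℝ) : Prop :=
  ∀ p : MeasureTheory.Measure ℝ, MemDelta k p →
    (∀ e ∈ Set.Ioi (0:ℝ), W e p ∈ Set.Icc (0:ℝ) 1) ∧
    Measurable (fun e => W e p) ∧ (∫ e, W e p ∂p) = k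

/-- Random Performance Function: `W e p = 1 - F e (s p)` where the cutoff
`s p` solves the market-clearing equation. -/
def IsRPF (k : ℝ) (W : ℝ → MeasureTheory.Measure ℝ → ℝ) : Prop :=
  ∃ F : ℝ → ℝ → ℝ, IsCDFfam F ∧
    ∀ p : MeasureTheory.Measure ℝ, MemDelta k p → ∃ s : ℝ,
      (∫ e, (1 - F e s) ∂p) = k ∧ ∀ e ∈ Set.Ioi (0:ℝ), W e p = 1 - F e s

/-- Co-monotonicity. -/
def CoMonotone (k : ℝ) (W : ℝ → MeasureTheory.Measure ℝ → ℝ) : Prop :=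
  ∀ e ∈ Set.Ioi (0:ℝ), ∀ e' ∈ Set.Ioi (0:ℝ), ∀ p p' : MeasureTheory.Measure ℝ,
    MemDelta k p → MemDelta k p' → W e p' ≤ W e p → W e' p' ≤ W e' p

/-- Monotonicity. -/
def CSFMonotone (k : ℝ) (W : ℝ → MeasureTheory.Measure ℝ → ℝ) : Prop :=
  ∀ p : MeasureTheory.Measure ℝ, MemDelta k p →
    StrictMonoOn (fun e => W e p) (Set.Ioi 0) ∧
    Filter.Tendsto (fun e => W e p) Filter.atTop (nhds 1)

/-- Competitiveness. -/
def CSFCompetitive (k : ℝ) (W : ℝ → MeasureTheory.Measure ℝ → ℝ) : Prop :=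
  ∀ e ∈ Set.Ioi (0:ℝ),
    Filter.Tendsto (fun eb => W e (MeasureTheory.Measure.dirac eb)) Filter.atTop (nhds 0)

/-- The mixture `α p + (1-α) p'`. -/
def mix (α : ℝ) (p p' : MeasureTheory.Measure ℝ) : MeasureTheory.Measure ℝ :=
  ENNReal.ofReal α • p + ENNReal.ofReal (1 - α) • p'

/-- p-Continuity. -/
def PContinuousCSF (k : ℝ) (W : ℝ → MeasureTheory.Measure ℝ → ℝ) : Prop :=
  ∀ e ∈ Set.Ioi (0:ℝ), ∀ p p' : MeasureTheory.Measure ℝ,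
    MemDelta k p → MemDelta k p' →
    ContinuousOn (fun α => W e (mix α p p')) (Set.Icc 0 1)

/-- e-Continuity. -/
def EContinuous (k : ℝ) (W : ℝ → MeasureTheory.Measure ℝ → ℝ) : Prop :=
  ∀ p : MeasureTheory.Measure ℝ, MemDelta k p →
    ContinuousOn (fun e => W e p) (Set.Ioi 0)

/-- The right-shift `p ∔ a`. -/
def shift (p : MeasureTheory.Measure ℝ) (a : ℝ) : MeasureTheory.Measure ℝ :=
  MeasureTheory.Measure.map (fun x => x + a) p

/-- A single continuous strictly increasing CDF on `ℝ`. -/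
def IsCDF (F : ℝ → ℝ) : Prop :=
  Continuous F ∧ StrictMono F ∧
  Filter.Tendsto F Filter.atBot (nhds 0) ∧ Filter.Tendsto F Filter.atTop (nhds 1)

/-- `F` represents `W` as an additive RPF: `W e p = 1 - F (s p - e)`. -/
def RepresentsA (k : ℝ) (W : ℝ → MeasureTheory.Measure ℝ → ℝ) (F : ℝ → ℝ) : Prop :=
  ∀ p : MeasureTheory.Measure ℝ, MemDelta k p → ∃ s : ℝ,
    (∫ e, (1 - F (s - e)) ∂p) = k ∧ ∀ e ∈ Set.Ioi (0:ℝ), W e p = 1 - F (s - e)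

/-- Additive RPF. -/
def IsARPF (k : ℝ) (W : ℝ → MeasureTheory.Measure ℝ → ℝ) : Prop :=
  ∃ F : ℝ → ℝ, IsCDF F ∧ RepresentsA k W F

/-- Invariance to Common Shifts. -/
def InvCommonShifts (k : ℝ) (W : ℝ → MeasureTheory.Measure ℝ → ℝ) : Prop :=
  ∀ e ∈ Set.Ioi (0:ℝ), ∀ a ∈ Set.Ioi (0:ℝ), ∀ p : MeasureTheory.Measure ℝ,
    MemDelta k p → W e p = W (e + a) (shift p a)

/-- Invariance to p Shifts. -/
def InvPShifts (k : ℝ) (W : ℝ → MeasureTheory.Measure ℝ → ℝ) : Prop :=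
  ∀ e ∈ Set.Ioi (0:ℝ), ∀ e' ∈ Set.Ioi (0:ℝ), ∀ a ∈ Set.Ioi (0:ℝ),
    ∀ p p' : MeasureTheory.Measure ℝ, MemDelta k p → MemDelta k p' →
    W e p = W e' p' → W e (shift p a) = W e' (shift p' a)

/-- existence and uniqueness of the market-clearing cutoff `s(p)`. -/
theorem cutoff_exists_unique (F : ℝ → ℝ → ℝ) (hF : IsCDFfam F)
    (k : ℝ) (hk : k ∈ Set.Ioo (0:ℝ) 1)
    (p : MeasureTheory.Measure ℝ) (hp : MemDelta k p) :
    ∃! s : ℝ, (∫ e, (1 - F e s) ∂p) = k := by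
  obtain ⟨hF1, hF2⟩ := hF
  obtain ⟨hp0, hpk, hp1⟩ := hp
  haveI : IsFiniteMeasure p := ⟨lt_of_le_of_lt hp1 (by norm_num)⟩
  -- a.e. every point is in Ioi 0
  have hae : ∀ᵐ e ∂p, e ∈ Set.Ioi (0:ℝ) := by
    rw [MeasureTheory.ae_iff]
    have : {e : ℝ | ¬ e ∈ Set.Ioi (0:ℝ)} = Set.Iic 0 := by
      ext x; simp [Set.mem_Ioi, not_lt]
    rw [this]; exact hp0
  -- bounds on F e s for e > 0
  have hmem : ∀ e ∈ Set.Ioi (0:ℝ), ∀ s : ℝ, F e s ∈ Set.Icc (0:ℝ) 1 := by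
    intro e he s
    obtain ⟨hc, hm, hb, ht⟩ := hF1 e he
    constructor
    · exact le_of_tendsto hb ((eventually_le_atBot s).mono fun x hx => hm.monotone hx)
    · exact ge_of_tendsto ht ((eventually_ge_atTop s).mono fun x hx => hm.monotone hx)
  -- the modified integrand
  set G : ℝ → ℝ → ℝ := fun s => (Set.Ioi (0:ℝ)).indicator (fun e => 1 - F e s) with hG
  have hGeq : ∀ s, (fun e => 1 - F e s) =ᵐ[p] G s := by
    intro s
    filter_upwards [hae] with e he
    simp [hG, Set.indicator_of_mem he]
  have hGmeas : ∀ s, AEStronglyMeasurable (G s) p := by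
    intro s
    have hc : ContinuousOn (fun e => 1 - F e s) (Set.Ioi 0) :=
      (continuousOn_const).sub (hF2 s).1
    have : AEMeasurable (G s) p := by
      rw [hG]
      rw [aemeasurable_indicator_iff measurableSet_Ioi]
      exact (hc.aemeasurable measurableSet_Ioi)
    exact this.aestronglyMeasurable
  have hGbd : ∀ s, ∀ e, ‖G s e‖ ≤ 1 := by
    intro s e
    by_cases he : e ∈ Set.Ioi (0:ℝ)
    · obtain ⟨h0, h1⟩ := hmem e he s
      simp only [hG, Set.indicator_of_mem he, Real.norm_eq_abs]
      rw [abs_le]; constructor <;> linarith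
    · simp [hG, Set.indicator_of_notMem he]
  have hGint : ∀ s, Integrable (G s) p := by
    intro s
    exact (integrable_const (1:ℝ)).mono' (hGmeas s)
      (Filter.Eventually.of_forall (hGbd s))
  -- g
  set g : ℝ → ℝ := fun s => ∫ e, G s e ∂p with hgdef
  have hgeq : ∀ s, (∫ e, (1 - F e s) ∂p) = g s := fun s =>
    integral_congr_ae (hGeq s)
  -- continuity
  have hgcont : Continuous g := by
    apply continuous_of_dominated hGmeas
      (fun s => Filter.Eventually.of_forall (hGbd s)) (integrable_const 1)
    filter_upwards [hae] with e he
    have : (fun s => G s e) = fun s => 1 - F e s := by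
      funext s; simp [hG, Set.indicator_of_mem he]
    rw [this]
    exact continuous_const.sub (hF1 e he).1
  -- p (Ioi 0) = p univ and positivity
  have hIoi : p (Set.Ioi 0) = p Set.univ := by
    refine le_antisymm (measure_mono (Set.subset_univ _)) ?_
    have : p Set.univ ≤ p (Set.Ioi 0) + p (Set.Iic 0) := by
      have : (Set.univ : Set ℝ) ⊆ Set.Ioi 0 ∪ Set.Iic 0 := by
        intro x _; rcases lt_or_ge 0 x with h | h
        · exact Or.inl h
        · exact Or.inr h
      exact le_trans (measure_mono this) (measure_union_le _ _)
    simpa [hp0] using this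
  have hIoipos : 0 < p (Set.Ioi 0) := by
    rw [hIoi]
    exact lt_of_le_of_lt zero_le hpk
  -- strict antitonicity
  have hganti : StrictAnti g := by
    intro s t hst
    have hint : Integrable (fun e => G s e - G t e) p := (hGint s).sub (hGint t)
    have hnn : 0 ≤ᵐ[p] fun e => G s e - G t e := by
      filter_upwards [hae] with e he
      obtain ⟨hc, hm, _, _⟩ := hF1 e he
      simp only [hG, Set.indicator_of_mem he]
      have := hm hst
      simp only [Pi.zero_apply]; linarith
    have hsupp : Set.Ioi (0:ℝ) ⊆ Function.support (fun e => G s e - G t e) := by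
      intro e he
      obtain ⟨hc, hm, _, _⟩ := hF1 e he
      have := hm hst
      simp only [Function.mem_support, hG, Set.indicator_of_mem he]
      intro hcontra; linarith [sub_eq_zero.mp hcontra]
    have hpos : 0 < ∫ e, (G s e - G t e) ∂p := by
      rw [(integral_pos_iff_support_of_nonneg_ae hnn hint)]
      exact lt_of_lt_of_le hIoipos (measure_mono hsupp)
    rw [integral_sub (hGint s) (hGint t)] at hpos
    simp only [hgdef]
    linarith
  -- k < (p univ).toReal
  have hfin : p Set.univ ≠ ⊤ := by
    exact ne_top_of_le_ne_top (by norm_num) hp1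
  have hklt : k < (p Set.univ).toReal := by
    have := (ENNReal.toReal_lt_toReal (by simp) hfin).mpr hpk
    rwa [ENNReal.toReal_ofReal hk.1.le] at this
  -- limit at -∞
  have hlim_bot : Filter.Tendsto g Filter.atBot (nhds ((p Set.univ).toReal)) := by
    have : Filter.Tendsto (fun s => ∫ e, G s e ∂p) Filter.atBot
        (nhds (∫ _e, (1:ℝ) ∂p)) := by
      apply tendsto_integral_filter_of_dominated_convergence (fun _ => (1:ℝ))
        (Filter.Eventually.of_forall hGmeas)
        (Filter.Eventually.of_forall fun s => Filter.Eventually.of_forall (hGbd s))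
        (integrable_const 1)
      filter_upwards [hae] with e he
      obtain ⟨hc, hm, hb, ht⟩ := hF1 e he
      have heq : (fun s => G s e) = fun s => 1 - F e s := by
        funext s; simp [hG, Set.indicator_of_mem he]
      rw [heq]
      have : Filter.Tendsto (fun s => 1 - F e s) Filter.atBot (nhds (1 - 0)) :=
        tendsto_const_nhds.sub hb
      simpa using this
    simpa [integral_const, smul_eq_mul, measureReal_def] using this
  -- limit at +∞
  have hlim_top : Filter.Tendsto g Filter.atTop (nhds 0) := by
    have : Filter.Tendsto (fun s => ∫ e, G s e ∂p) Filter.atTop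
        (nhds (∫ _e, (0:ℝ) ∂p)) := by
      apply tendsto_integral_filter_of_dominated_convergence (fun _ => (1:ℝ))
        (Filter.Eventually.of_forall hGmeas)
        (Filter.Eventually.of_forall fun s => Filter.Eventually.of_forall (hGbd s))
        (integrable_const 1)
      filter_upwards [hae] with e he
      obtain ⟨hc, hm, hb, ht⟩ := hF1 e he
      have heq : (fun s => G s e) = fun s => 1 - F e s := by
        funext s; simp [hG, Set.indicator_of_mem he]
      rw [heq]
      have : Filter.Tendsto (fun s => 1 - F e s) Filter.atTop (nhds (1 - 1)) :=
        tendsto_const_nhds.sub ht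
      simpa using this
    simpa using this
  -- get points above and below k
  have ha : ∃ a, k < g a := by
    have := hlim_bot.eventually (eventually_gt_nhds hklt)
    exact ⟨(this.exists).choose, (this.exists).choose_spec⟩
  have hb : ∃ b, g b < k := by
    have := hlim_top.eventually (eventually_lt_nhds hk.1)
    exact ⟨(this.exists).choose, (this.exists).choose_spec⟩
  obtain ⟨a, hak⟩ := ha
  obtain ⟨b, hbk⟩ := hb
  have hab : a ≤ b := by
    by_contra h
    push_neg at h
    exact absurd (hganti h) (by linarith)
  have hIVT := intermediate_value_Icc' hab (hgcont.continuousOn)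
  have hkmem : k ∈ Set.Icc (g b) (g a) := ⟨hbk.le, hak.le⟩
  obtain ⟨s, _, hs⟩ := hIVT hkmem
  refine ⟨s, (hgeq s).trans hs, ?_⟩
  intro t ht
  have ht' : g t = k := (hgeq t).symm.trans ht
  exact hganti.injective (ht'.trans hs.symm)
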